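/- Let r ∈ (0,1] and θ₀ ∈ ℝ, and define for θ ∈ ℝ the function f(θ) := (1 − (1+r)cos²θ₀ − (1+r)cos²θ + (1+r)²·cos θ₀·cos θ·cos(θ − θ₀)) / √((1 − (1−r²)cos²θ₀)(1 − (1−r²)cos²θ)). Then f is differentiable and its derivative satisfies, for all θ ∈ ℝ, the factorization (1 − (1−r²)cos²θ₀)^{1/2}·(1 − (1−r²)cos²θ)^{3/2}·f'(θ) = (1+r)²·sin(θ − θ₀)·(−r·cos²θ − sin²θ)·(r·cos θ₀·cos θ + sin θ₀·sin θ). -/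

import Mathlib

/-- The scalar product of two renormalized inelastic post-collisional velocities in the
coplanar case, as a function of the angles `θ₀` (from `v` to `σ`) and `θ` (from `v` to `ω`). -/
noncomputable def coplanarScalarProduct (r θ₀ θ : ℝ) : ℝ :=
  (1 - (1 + r) * Real.cos θ₀ ^ 2 - (1 + r) * Real.cos θ ^ 2
      + (1 + r) ^ 2 * Real.cos θ₀ * Real.cos θ * Real.cos (θ - θ₀)) /
    Real.sqrt ((1 - (1 - r ^ 2) * Real.cos θ₀ ^ 2) * (1 - (1 - r ^ 2) * Real.cos θ ^ 2))

private lemma alg_aux (sa sb n m u : ℝ) (h1 : sa ≠ 0) (h2 : sb ≠ 0) :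
    sa * (sb ^ 2 * sb) *
        ((n * (sa * sb) - m * (sa ^ 2 * (2 * u) / (2 * (sa * sb)))) / (sa * sb) ^ 2)
      = n * sb ^ 2 - m * u := by
  field_simp

/-- The coplanar scalar product is differentiable, and its derivative satisfies the
factorization
`(1−(1−r²)cos²θ₀)^(1/2)·(1−(1−r²)cos²θ)^(3/2)·f'(θ)
  = (1+r)²·sin(θ−θ₀)·(−r·cos²θ−sin²θ)·(r·cosθ₀·cosθ+sinθ₀·sinθ)`. -/
theorem coplanarScalarProduct_deriv_factorization (r θ₀ : ℝ) (hr : r ∈ Set.Ioc (0 : ℝ) 1) :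
    Differentiable ℝ (coplanarScalarProduct r θ₀) ∧
      ∀ θ : ℝ,
        (1 - (1 - r ^ 2) * Real.cos θ₀ ^ 2) ^ ((1 : ℝ) / 2) *
            (1 - (1 - r ^ 2) * Real.cos θ ^ 2) ^ ((3 : ℝ) / 2) *
            deriv (coplanarScalarProduct r θ₀) θ
          = (1 + r) ^ 2 * Real.sin (θ - θ₀) * (-r * Real.cos θ ^ 2 - Real.sin θ ^ 2) *
              (r * Real.cos θ₀ * Real.cos θ + Real.sin θ₀ * Real.sin θ) := by
  obtain ⟨hr0, hr1⟩ := hr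
  have hr2 : (0:ℝ) ≤ 1 - r ^ 2 := by nlinarith
  have hA : 0 < 1 - (1 - r ^ 2) * Real.cos θ₀ ^ 2 := by
    nlinarith [Real.cos_sq_le_one θ₀, sq_nonneg (Real.cos θ₀),
      mul_nonneg hr2 (sq_nonneg (Real.cos θ₀))]
  have hB : ∀ θ : ℝ, 0 < 1 - (1 - r ^ 2) * Real.cos θ ^ 2 := fun θ => by
    nlinarith [Real.cos_sq_le_one θ, sq_nonneg (Real.cos θ),
      mul_nonneg hr2 (sq_nonneg (Real.cos θ))]
  -- the key derivative computation
  have key : ∀ θ : ℝ, HasDerivAt (coplanarScalarProduct r θ₀)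
      (((2 * (1 + r) * Real.cos θ * Real.sin θ
            + (1 + r) ^ 2 * Real.cos θ₀ *
              (-Real.sin θ * Real.cos (θ - θ₀) - Real.cos θ * Real.sin (θ - θ₀))) *
          Real.sqrt ((1 - (1 - r ^ 2) * Real.cos θ₀ ^ 2) * (1 - (1 - r ^ 2) * Real.cos θ ^ 2))
        - (1 - (1 + r) * Real.cos θ₀ ^ 2 - (1 + r) * Real.cos θ ^ 2
            + (1 + r) ^ 2 * Real.cos θ₀ * Real.cos θ * Real.cos (θ - θ₀)) *
          ((1 - (1 - r ^ 2) * Real.cos θ₀ ^ 2) *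
              (2 * ((1 - r ^ 2) * Real.cos θ * Real.sin θ)) /
            (2 * Real.sqrt ((1 - (1 - r ^ 2) * Real.cos θ₀ ^ 2)
              * (1 - (1 - r ^ 2) * Real.cos θ ^ 2)))))
      / Real.sqrt ((1 - (1 - r ^ 2) * Real.cos θ₀ ^ 2)
          * (1 - (1 - r ^ 2) * Real.cos θ ^ 2)) ^ 2) θ := by
    intro θ
    have hD : 0 < (1 - (1 - r ^ 2) * Real.cos θ₀ ^ 2) * (1 - (1 - r ^ 2) * Real.cos θ ^ 2) :=
      mul_pos hA (hB θ)
    have hcos2 : ∀ x : ℝ, HasDerivAt (fun y => Real.cos y ^ 2)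
        (2 * Real.cos x * (-Real.sin x)) x := fun x => by
      have h := (Real.hasDerivAt_cos x).pow 2
      simp at h ⊢
      exact h
    have hcosd : HasDerivAt (fun y => Real.cos (y - θ₀)) (-Real.sin (θ - θ₀)) θ := by
      have h := (Real.hasDerivAt_cos (θ - θ₀)).comp θ ((hasDerivAt_id θ).sub_const θ₀)
      simp at h ⊢
      exact h
    -- numerator
    have hN : HasDerivAt (fun y => 1 - (1 + r) * Real.cos θ₀ ^ 2 - (1 + r) * Real.cos y ^ 2
        + (1 + r) ^ 2 * Real.cos θ₀ * Real.cos y * Real.cos (y - θ₀))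
        (2 * (1 + r) * Real.cos θ * Real.sin θ
          + (1 + r) ^ 2 * Real.cos θ₀ *
            (-Real.sin θ * Real.cos (θ - θ₀) - Real.cos θ * Real.sin (θ - θ₀))) θ := by
      have h1 := ((hcos2 θ).const_mul (1 + r)).const_sub (1 - (1 + r) * Real.cos θ₀ ^ 2)
      have h2 := (((Real.hasDerivAt_cos θ).mul hcosd).const_mul ((1 + r) ^ 2 * Real.cos θ₀))
      have h3 := h1.add h2
      have heq : (fun y => 1 - (1 + r) * Real.cos θ₀ ^ 2 - (1 + r) * Real.cos y ^ 2
          + (1 + r) ^ 2 * Real.cos θ₀ * Real.cos y * Real.cos (y - θ₀))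
          = fun y => (1 - (1 + r) * Real.cos θ₀ ^ 2 - (1 + r) * Real.cos y ^ 2)
            + (1 + r) ^ 2 * Real.cos θ₀ * (Real.cos y * Real.cos (y - θ₀)) := by
        funext y; ring
      rw [heq]
      exact h3.congr_deriv (by ring)
    -- denominator
    have hDen : HasDerivAt (fun y => (1 - (1 - r ^ 2) * Real.cos θ₀ ^ 2)
        * (1 - (1 - r ^ 2) * Real.cos y ^ 2))
        ((1 - (1 - r ^ 2) * Real.cos θ₀ ^ 2) * (2 * ((1 - r ^ 2) * Real.cos θ * Real.sin θ)))
        θ := by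
      have h1 := (((hcos2 θ).const_mul (1 - r ^ 2)).const_sub 1).const_mul
        (1 - (1 - r ^ 2) * Real.cos θ₀ ^ 2)
      exact h1.congr_deriv (by ring)
    have hsq := hDen.sqrt hD.ne'
    have hne : Real.sqrt ((1 - (1 - r ^ 2) * Real.cos θ₀ ^ 2)
        * (1 - (1 - r ^ 2) * Real.cos θ ^ 2)) ≠ 0 := (Real.sqrt_pos.mpr hD).ne'
    have := hN.div hsq hne
    exact this
  refine ⟨fun θ => (key θ).differentiableAt, fun θ => ?_⟩
  rw [(key θ).deriv]
  have hmul : Real.sqrt ((1 - (1 - r ^ 2) * Real.cos θ₀ ^ 2)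
      * (1 - (1 - r ^ 2) * Real.cos θ ^ 2))
      = Real.sqrt (1 - (1 - r ^ 2) * Real.cos θ₀ ^ 2)
        * Real.sqrt (1 - (1 - r ^ 2) * Real.cos θ ^ 2) := Real.sqrt_mul hA.le _
  have hA12 : (1 - (1 - r ^ 2) * Real.cos θ₀ ^ 2) ^ ((1 : ℝ) / 2)
      = Real.sqrt (1 - (1 - r ^ 2) * Real.cos θ₀ ^ 2) := (Real.sqrt_eq_rpow _).symm
  have hB32 : (1 - (1 - r ^ 2) * Real.cos θ ^ 2) ^ ((3 : ℝ) / 2)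
      = (1 - (1 - r ^ 2) * Real.cos θ ^ 2) * Real.sqrt (1 - (1 - r ^ 2) * Real.cos θ ^ 2) := by
    rw [show ((3 : ℝ) / 2) = 1 + 1 / 2 by norm_num, Real.rpow_add (hB θ), Real.rpow_one,
      ← Real.sqrt_eq_rpow]
  rw [hmul, hA12, hB32]
  set sa := Real.sqrt (1 - (1 - r ^ 2) * Real.cos θ₀ ^ 2) with hsadef
  set sb := Real.sqrt (1 - (1 - r ^ 2) * Real.cos θ ^ 2) with hsbdef
  have hsa : sa ^ 2 = 1 - (1 - r ^ 2) * Real.cos θ₀ ^ 2 := Real.sq_sqrt hA.le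
  have hsb : sb ^ 2 = 1 - (1 - r ^ 2) * Real.cos θ ^ 2 := Real.sq_sqrt (hB θ).le
  have hsa0 : sa ≠ 0 := by rw [hsadef]; exact (Real.sqrt_pos.mpr hA).ne'
  have hsb0 : sb ≠ 0 := by rw [hsbdef]; exact (Real.sqrt_pos.mpr (hB θ)).ne'
  rw [← hsa, ← hsb]
  rw [alg_aux _ _ _ _ _ hsa0 hsb0]
  rw [hsb]
  rw [Real.cos_sub, Real.sin_sub]
  set c := Real.cos θ
  set s := Real.sin θ
  set c0 := Real.cos θ₀
  set s0 := Real.sin θ₀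
  have h1 : s ^ 2 + c ^ 2 = 1 := Real.sin_sq_add_cos_sq θ
  have h2 : s0 ^ 2 + c0 ^ 2 = 1 := Real.sin_sq_add_cos_sq θ₀
  linear_combination
    (s^2*c0*s0 - c*s*s0^2 - c^2*c0*s0 + 2*r*s^2*c0*s0 - 2*r*c*s*s0^2 + r*c*s*c0^2
      - 2*r*c^2*c0*s0 + r^2*s^2*c0*s0 - r^2*c*s*s0^2 + 2*r^2*c*s*c0^2 - r^2*c^2*c0*s0
      + r^3*c*s*c0^2) * h1
    + (-c*s + c^3*s - 2*r*c*s + r*c^3*s - r^2*c*s - r^2*c^3*s - r^3*c^3*s) * h2
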